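/- (Lemarié–Rieusset type equation.) Let X be a real Banach space, m ≥ 2 an integer, T : X^m → X a continuous m-multilinear map with ‖T(y₁,…,y_m)‖ ≤ C ‖y₁‖⋯‖y_m‖ for some C > 0, and η ∈ X with a = ‖η‖ < ((m−1)/m) · (1/(C m))^{1/(m−1)}. Let r* be the smallest nonnegative root of a + C r^m = r and r_* the smallest nonnegative root of a − C r^m = r. Then there exists a unique x* ∈ X with ‖x*‖ ≤ (1/(C m))^{1/(m−1)} satisfying x* = η + T(x*,…,x*), and this solution satisfies r_* ≤ ‖x*‖ ≤ r*. -/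

import Mathlib

/-- Lemarié–Rieusset type equation `x = η + T(x,…,x)` for a bounded
`m`-multilinear operator `T`: if `a = ‖η‖` is below the critical value,
the equation has a unique solution in the ball of radius `(1/(Cm))^{1/(m-1)}`,
and this solution satisfies `r_* ≤ ‖x*‖ ≤ r*`. -/
theorem lemarie_rieusset_equation
    {X : Type*} [NormedAddCommGroup X] [NormedSpace ℝ X] [CompleteSpace X]
    (m : ℕ) (hm : 2 ≤ m)
    (T : ContinuousMultilinearMap ℝ (fun _ : Fin m => X) X)
    (C : ℝ) (hC : 0 < C) (hT : ∀ y : Fin m → X, ‖T y‖ ≤ C * ∏ i, ‖y i‖)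
    (η : X) (a : ℝ) (ha : a = ‖η‖)
    (ha_cr : a < (((m : ℝ) - 1) / m) * (1 / (C * m)) ^ ((1 : ℝ) / ((m : ℝ) - 1)))
    (rstar : ℝ) (hrstar_nonneg : 0 ≤ rstar)
    (hrstar_root : a + C * rstar ^ m = rstar)
    (hrstar_min : ∀ s : ℝ, 0 ≤ s → a + C * s ^ m = s → rstar ≤ s)
    (rlow : ℝ) (hrlow_nonneg : 0 ≤ rlow)
    (hrlow_root : a - C * rlow ^ m = rlow)
    (hrlow_min : ∀ s : ℝ, 0 ≤ s → a - C * s ^ m = s → rlow ≤ s) :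
    ∃ xstar : X,
      (‖xstar‖ ≤ (1 / (C * m)) ^ ((1 : ℝ) / ((m : ℝ) - 1)) ∧
        xstar = η + T (fun _ => xstar) ∧
        rlow ≤ ‖xstar‖ ∧ ‖xstar‖ ≤ rstar) ∧
      ∀ y : X, ‖y‖ ≤ (1 / (C * m)) ^ ((1 : ℝ) / ((m : ℝ) - 1)) →
        y = η + T (fun _ => y) → y = xstar := by
  classical
  have mpos : (0:ℝ) < m := by positivity
  have hm1 : (1:ℝ) ≤ (m:ℝ) - 1 := by
    have : (2:ℝ) ≤ m := by exact_mod_cast hm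
    linarith
  have he : (0:ℝ) < (m:ℝ) - 1 := by linarith
  set R : ℝ := (1 / (C * m)) ^ ((1 : ℝ) / ((m : ℝ) - 1)) with hRdef
  have hb : (0:ℝ) < 1 / (C * m) := by positivity
  have hR : 0 < R := Real.rpow_pos_of_pos hb _
  have hRe : R ^ ((m:ℝ) - 1) = 1 / (C * m) := by
    rw [hRdef, ← Real.rpow_mul hb.le, one_div ((m:ℝ)-1), inv_mul_cancel₀ he.ne',
      Real.rpow_one]
  have hRpow : R ^ (m - 1) = 1 / (C * m) := by
    have : ((m - 1 : ℕ) : ℝ) = (m:ℝ) - 1 := by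
      have : 1 ≤ m := by omega
      push_cast [this]; ring
    rw [← Real.rpow_natCast R (m-1), this, hRe]
  have hCmR : C * m * R ^ (m - 1) = 1 := by
    rw [hRpow]; field_simp
  have hCRm1 : C * R ^ (m - 1) = 1 / m := by
    field_simp at hCmR ⊢; nlinarith [hCmR]
  have hRm : R ^ m = R ^ (m - 1) * R := by
    rw [← pow_succ]; congr 1; omega
  have hCRm : C * R ^ m = R / m := by
    rw [hRm, ← mul_assoc, hCRm1]; ring
  have ha0 : 0 ≤ a := ha ▸ norm_nonneg η
  have hgR : a + C * R ^ m < R := by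
    rw [hCRm]
    have : (((m : ℝ) - 1) / m) * R + R / m = R := by field_simp; ring
    linarith [ha_cr, this]
  -- rstar < R
  have hlt : rstar < R := by
    obtain ⟨s, hs_mem, hs⟩ : ∃ s ∈ Set.Icc (0:ℝ) R, a + C * s ^ m - s = 0 := by
      have hcont : ContinuousOn (fun r : ℝ => a + C * r ^ m - r) (Set.Icc 0 R) := by
        fun_prop
      have h0 : (0:ℝ) ∈ Set.Icc (a + C * R ^ m - R) (a + C * 0 ^ m - 0) := by
        constructor
        · linarith
        · simp [zero_pow (by omega : m ≠ 0)]; linarith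
      have := intermediate_value_Icc' hR.le hcont h0
      obtain ⟨s, hs_mem, hs⟩ := this
      exact ⟨s, hs_mem, hs⟩
    have h1 : rstar ≤ s := hrstar_min s hs_mem.1 (by linarith)
    have h2 : s ≤ R := hs_mem.2
    rcases lt_or_eq_of_le (h1.trans h2) with h | h
    · exact h
    · exfalso; rw [h] at hrstar_root; linarith
  have hrstarpow : rstar ^ (m - 1) < R ^ (m - 1) :=
    pow_lt_pow_left₀ hlt hrstar_nonneg (by omega)
  set k : ℝ := C * m * rstar ^ (m - 1) with hkdef
  have hk0 : 0 ≤ k := by positivity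
  have hk1 : k < 1 := by
    calc k < C * m * R ^ (m - 1) := by
            apply mul_lt_mul_of_pos_left hrstarpow (by positivity)
      _ = 1 := hCmR
  -- key strict decrease lemma
  have key : ∀ t : ℝ, rstar < t → t ≤ R → a + C * t ^ m < t := by
    intro t ht htR
    have ht0 : 0 ≤ t := hrstar_nonneg.trans ht.le
    have hfac := geom_sum₂_mul t rstar m
    have hsum : (∑ i ∈ Finset.range m, t ^ i * rstar ^ (m - 1 - i))
        < (m:ℝ) * R ^ (m - 1) := by
      have := Finset.sum_lt_sum
        (f := fun i => t ^ i * rstar ^ (m - 1 - i))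
        (g := fun _ : ℕ => R ^ (m - 1)) (s := Finset.range m)
        (by
          intro i hi
          simp only [Finset.mem_range] at hi
          have h1 : t ^ i ≤ R ^ i := pow_le_pow_left₀ ht0 htR i
          have h2 : rstar ^ (m - 1 - i) ≤ R ^ (m - 1 - i) :=
            pow_le_pow_left₀ hrstar_nonneg hlt.le _
          calc t ^ i * rstar ^ (m - 1 - i) ≤ R ^ i * R ^ (m - 1 - i) := by
                apply mul_le_mul h1 h2 (by positivity) (by positivity)
            _ = R ^ (m - 1) := by rw [← pow_add]; congr 1; omega)
        (by
          refine ⟨0, Finset.mem_range.2 (by omega), ?_⟩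
          simpa using hrstarpow)
      simpa [Finset.sum_const, Finset.card_range, nsmul_eq_mul] using this
    have htr : 0 < t - rstar := sub_pos.2 ht
    have h1 : (∑ i ∈ Finset.range m, t ^ i * rstar ^ (m - 1 - i)) * (t - rstar)
        < (m:ℝ) * R ^ (m - 1) * (t - rstar) := mul_lt_mul_of_pos_right hsum htr
    rw [hfac] at h1
    have h2 : C * (t ^ m - rstar ^ m) < C * ((m:ℝ) * R ^ (m - 1) * (t - rstar)) :=
      mul_lt_mul_of_pos_left h1 hC
    have h3 : C * ((m:ℝ) * R ^ (m - 1) * (t - rstar)) = t - rstar := by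
      have : C * ((m:ℝ) * R ^ (m - 1) * (t - rstar))
          = (C * m * R ^ (m - 1)) * (t - rstar) := by ring
      rw [this, hCmR, one_mul]
    rw [h3] at h2
    linarith [hrstar_root]
  -- norm of T on the diagonal
  have hTnorm : ∀ x : X, ‖T (fun _ => x)‖ ≤ C * ‖x‖ ^ m := by
    intro x
    have := hT (fun _ => x)
    simpa [Finset.prod_const, Finset.card_fin] using this
  -- any fixed point in the R-ball lies in the rstar-ball
  have hfix_le : ∀ y : X, ‖y‖ ≤ R → y = η + T (fun _ => y) → ‖y‖ ≤ rstar := by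
    intro y hyR hy
    by_contra h
    push_neg at h
    have h1 : ‖y‖ ≤ a + C * ‖y‖ ^ m := by
      calc ‖y‖ = ‖η + T (fun _ => y)‖ := by rw [← hy]
        _ ≤ ‖η‖ + ‖T (fun _ => y)‖ := norm_add_le _ _
        _ ≤ a + C * ‖y‖ ^ m := by rw [ha]; exact add_le_add le_rfl (hTnorm y)
    exact absurd h1 (not_le.2 (key ‖y‖ h hyR))
  -- difference bound
  haveI : Nonempty (Fin m) := ⟨⟨0, by omega⟩⟩
  have hdiff : ∀ x y : X, ‖x‖ ≤ rstar → ‖y‖ ≤ rstar →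
      ‖T (fun _ => x) - T (fun _ => y)‖ ≤ k * ‖x - y‖ := by
    intro x y hx hy
    have hbd := T.toMultilinearMap.norm_image_sub_le_of_bound hC.le hT
      (fun _ => x) (fun _ => y)
    have hsub : (fun _ : Fin m => x) - (fun _ : Fin m => y) = fun _ : Fin m => x - y := by
      funext i; simp
    rw [hsub] at hbd
    simp only [ContinuousMultilinearMap.coe_coe, pi_norm_const, Fintype.card_fin] at hbd
    have hmax : max ‖x‖ ‖y‖ ≤ rstar := max_le hx hy
    have hmax0 : 0 ≤ max ‖x‖ ‖y‖ := le_max_of_le_left (norm_nonneg x)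
    calc ‖T (fun _ => x) - T (fun _ => y)‖
        ≤ C * m * max ‖x‖ ‖y‖ ^ (m - 1) * ‖x - y‖ := hbd
      _ ≤ C * m * rstar ^ (m - 1) * ‖x - y‖ := by
          apply mul_le_mul_of_nonneg_right _ (norm_nonneg _)
          exact mul_le_mul_of_nonneg_left (pow_le_pow_left₀ hmax0 hmax _) (by positivity)
      _ = k * ‖x - y‖ := by rw [hkdef]
  -- set up the fixed point on the closed ball of radius rstar
  set S := Metric.closedBall (0:X) rstar with hSdef
  haveI : CompleteSpace S := IsClosed.completeSpace_coe (hs := Metric.isClosed_closedBall)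
  haveI : Nonempty S := ⟨⟨0, Metric.mem_closedBall_self hrstar_nonneg⟩⟩
  have hmem : ∀ z : X, z ∈ S ↔ ‖z‖ ≤ rstar := fun z => mem_closedBall_zero_iff
  have hFmem : ∀ x : S, η + T (fun _ => (x:X)) ∈ S := by
    intro x
    rw [hmem]
    have hx : ‖(x:X)‖ ≤ rstar := (hmem _).1 x.2
    calc ‖η + T (fun _ => (x:X))‖ ≤ ‖η‖ + ‖T (fun _ => (x:X))‖ := norm_add_le _ _
      _ ≤ a + C * ‖(x:X)‖ ^ m := by rw [ha]; exact add_le_add le_rfl (hTnorm _)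
      _ ≤ a + C * rstar ^ m := by
          have := pow_le_pow_left₀ (norm_nonneg (x:X)) hx m
          nlinarith
      _ = rstar := hrstar_root
  set F : S → S := fun x => ⟨η + T (fun _ => (x:X)), hFmem x⟩ with hFdef
  have hLip : LipschitzWith ⟨k, hk0⟩ F := by
    apply LipschitzWith.of_dist_le_mul
    intro x y
    rw [Subtype.dist_eq]
    show dist (η + T (fun _ => (x:X))) (η + T (fun _ => (y:X))) ≤ _
    rw [dist_eq_norm, add_sub_add_left_eq_sub, Subtype.dist_eq, dist_eq_norm]
    exact hdiff _ _ ((hmem _).1 x.2) ((hmem _).1 y.2)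
  have hcontr : ContractingWith ⟨k, hk0⟩ F := ⟨by exact_mod_cast hk1, hLip⟩
  obtain ⟨xs, hfixed⟩ : ∃ x : S, F x = x :=
    ⟨hcontr.fixedPoint F, hcontr.fixedPoint_isFixedPt⟩
  set xstar : X := (xs : X) with hxstar
  have heq : xstar = η + T (fun _ => xstar) := (congrArg Subtype.val hfixed).symm
  have hx_rstar : ‖xstar‖ ≤ rstar := (hmem _).1 xs.2
  have hx_R : ‖xstar‖ ≤ R := hx_rstar.trans hlt.le
  have hx_low : rlow ≤ ‖xstar‖ := by
    have ht0 : 0 ≤ ‖xstar‖ := norm_nonneg _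
    have h1 : a - C * ‖xstar‖ ^ m ≤ ‖xstar‖ := by
      have hη : xstar - T (fun _ => xstar) = η := by
        nth_rewrite 1 [heq]; abel
      have : a ≤ ‖xstar‖ + C * ‖xstar‖ ^ m := by
        calc a = ‖η‖ := ha
          _ = ‖xstar - T (fun _ => xstar)‖ := by rw [hη]
          _ ≤ ‖xstar‖ + ‖T (fun _ => xstar)‖ := norm_sub_le _ _
          _ ≤ ‖xstar‖ + C * ‖xstar‖ ^ m := add_le_add le_rfl (hTnorm _)
      linarith
    by_contra h
    push_neg at h
    have h2 : ‖xstar‖ ^ m ≤ rlow ^ m := pow_le_pow_left₀ ht0 h.le m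
    have h3 : C * ‖xstar‖ ^ m ≤ C * rlow ^ m := mul_le_mul_of_nonneg_left h2 hC.le
    linarith [hrlow_root]
  refine ⟨xstar, ⟨hx_R, heq, hx_low, hx_rstar⟩, ?_⟩
  intro y hyR hy
  have hy_rstar : ‖y‖ ≤ rstar := hfix_le y hyR hy
  have hdy : ‖y - xstar‖ ≤ k * ‖y - xstar‖ := by
    calc ‖y - xstar‖ = ‖T (fun _ => y) - T (fun _ => xstar)‖ := by
          rw [hy, heq, add_sub_add_left_eq_sub, ← hy, ← heq]
      _ ≤ k * ‖y - xstar‖ := hdiff _ _ hy_rstar hx_rstar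
  have hd0 : 0 ≤ ‖y - xstar‖ := norm_nonneg _
  have hz : ‖y - xstar‖ = 0 := by
    by_contra hne
    have hdpos : 0 < ‖y - xstar‖ := lt_of_le_of_ne hd0 (Ne.symm hne)
    have h6 : k * ‖y - xstar‖ < 1 * ‖y - xstar‖ := mul_lt_mul_of_pos_right hk1 hdpos
    linarith
  exact sub_eq_zero.1 (norm_eq_zero.1 hz)
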